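/- For M ≥ 8, 0 < θ < π/M, and 1 ≤ q ≤ M/2 − 3: 4 cos(θ/2 + πq/M) sin(π/M) ≥ 4 sin(π/M − θ/2) sin(2π/M). -/

import Mathlib

open Real

/-- For `M ≥ 8`, `0 < θ < π/M`, and `1 ≤ q ≤ M/2 − 3`:
`4 cos(θ/2 + πq/M) sin(π/M) ≥ 4 sin(π/M − θ/2) sin(2π/M)`. -/
theorem stmt_4 (M : ℕ) (hM : 8 ≤ M) (θ : ℝ) (hθ0 : 0 < θ) (hθ : θ < π / M)
    (q : ℕ) (hq1 : 1 ≤ q) (hq2 : q ≤ M / 2 - 3) :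
    4 * Real.sin (π / M - θ / 2) * Real.sin (2 * π / M)
      ≤ 4 * Real.cos (θ / 2 + π * q / M) * Real.sin (π / M) := by
  have hM8 : (8:ℝ) ≤ (M:ℝ) := by exact_mod_cast hM
  have hMpos : (0:ℝ) < M := by linarith
  set x := π / M with hxdef
  have hx0 : 0 < x := by positivity
  have hx8 : x ≤ π / 8 := by
    rw [hxdef, div_le_div_iff₀ hMpos (by norm_num)]
    nlinarith [pi_pos]
  have hθx : θ < x := hθ
  -- bound on q
  have hqn : 2 * q + 6 ≤ M := by omega
  have hqr : (q:ℝ) ≤ (M:ℝ)/2 - 3 := by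
    have : (2 * q + 6 : ℝ) ≤ M := by exact_mod_cast hqn
    linarith
  have hq' : π * q / M ≤ π / 2 - 3 * x := by
    have h1 : π * q / M ≤ π * ((M:ℝ)/2 - 3) / M := by
      gcongr
    have h2 : π * ((M:ℝ)/2 - 3) / M = π / 2 - 3 * x := by
      rw [hxdef]; field_simp
    linarith
  have hq0 : (0:ℝ) ≤ π * q / M := by positivity
  -- cos lower bound
  have hcos : Real.cos (θ/2 + (π/2 - 3*x)) ≤ Real.cos (θ/2 + π * q / M) := by
    apply Real.cos_le_cos_of_nonneg_of_le_pi
    · positivity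
    · linarith [pi_pos]
    · linarith
  have hsin3 : Real.cos (θ/2 + (π/2 - 3*x)) = Real.sin (3*x - θ/2) := by
    rw [← Real.sin_pi_div_two_sub]; ring_nf
  -- key identity
  have key : 4 * Real.sin (x - θ/2) * Real.sin (2*x)
      = 4 * (Real.sin (2*x - θ/2) - Real.sin (θ/2)) * Real.sin x := by
    rw [Real.sin_sub (2*x), Real.sin_sub x, Real.sin_two_mul, Real.cos_two_mul]
    ring
  have h2xpi : (2:ℝ) * π / M = 2 * x := by rw [hxdef]; ring
  have hsinx : 0 < Real.sin x := Real.sin_pos_of_pos_of_lt_pi hx0 (by linarith [pi_pos])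
  have hmono : Real.sin (2*x - θ/2) ≤ Real.sin (3*x - θ/2) :=
    Real.sin_le_sin_of_le_of_le_pi_div_two (by linarith [pi_pos]) (by linarith [pi_pos])
      (by linarith)
  have hsθ : 0 ≤ Real.sin (θ/2) := Real.sin_nonneg_of_nonneg_of_le_pi (by linarith)
    (by nlinarith [pi_pos])
  have step : Real.sin (2*x - θ/2) - Real.sin (θ/2) ≤ Real.cos (θ/2 + π * q / M) := by
    rw [← hsin3] at hmono
    linarith
  calc 4 * Real.sin (π / M - θ / 2) * Real.sin (2 * π / M)
      = 4 * (Real.sin (2*x - θ/2) - Real.sin (θ/2)) * Real.sin x := by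
        rw [h2xpi]; exact key
    _ ≤ 4 * Real.cos (θ/2 + π * q / M) * Real.sin x := by
        have h := mul_le_mul_of_nonneg_right step hsinx.le
        linarith
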